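/- Let H be a real separable Hilbert space and let ψ : [0,∞) → [0,1] be a bounded, continuous, strictly decreasing positive definite function with ψ(t) → 0 as t → ∞ (e.g. ψ(t) = e^{-t²}), and set k(x,y) = ψ(‖x−y‖). Let P₁ and P₂ be Borel probability measures on H with kernel mean functions m_{P₁} and m_{P₂}. If m_{P₂}(y) > m_{P₁}(y) for a given y ∈ H, then there exists r > 0 such that P₂(B_r(y)) > P₁(B_r(y)), where B_r(y) = {x ∈ H : ‖x − y‖ < r} is the open ball of radius r centered at y. -/

import Mathlib

open MeasureTheory Filter
open scoped RealInnerProductSpace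

noncomputable section

/-- A positive definite kernel: symmetric and with positive semi-definite Gram matrices. -/
def IsPosDefKernel {X : Type*} (k : X → X → ℝ) : Prop :=
  (∀ x y, k x y = k y x) ∧
  ∀ (n : ℕ) (a : Fin n → ℝ) (x : Fin n → X),
    0 ≤ ∑ i, ∑ j, a i * a j * k (x i) (x j)

/-- Let `H` be a real separable Hilbert space, `ψ : [0,∞) → [0,1]` a bounded,
continuous, strictly decreasing positive definite function with `ψ(t) → 0` as `t → ∞`, and
`k(x,y) = ψ(‖x-y‖)`. If the kernel means satisfy `m_{P₂}(y) > m_{P₁}(y)`, then there is `r > 0`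
with `P₂(B_r(y)) > P₁(B_r(y))`. -/
theorem statement_0
    {H : Type*} [NormedAddCommGroup H] [InnerProductSpace ℝ H]
    [CompleteSpace H] [SecondCountableTopology H]
    [MeasurableSpace H] [BorelSpace H]
    (ψ : ℝ → ℝ)
    (hrange : ∀ t : ℝ, 0 ≤ t → ψ t ∈ Set.Icc (0 : ℝ) 1)
    (hcont : ContinuousOn ψ (Set.Ici 0))
    (hanti : StrictAntiOn ψ (Set.Ici 0))
    (hlim : Tendsto ψ atTop (nhds 0))
    (hpd : IsPosDefKernel (fun x y : H => ψ ‖x - y‖))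
    (P₁ P₂ : Measure H) [IsProbabilityMeasure P₁] [IsProbabilityMeasure P₂]
    (y : H)
    (h : (∫ x, ψ ‖y - x‖ ∂P₁) < ∫ x, ψ ‖y - x‖ ∂P₂) :
    ∃ r : ℝ, 0 < r ∧ P₁ (Metric.ball y r) < P₂ (Metric.ball y r) := by
  by_contra hcon
  push_neg at hcon
  -- the function
  set f : H → ℝ := fun a => ψ ‖y - a‖ with hf
  have f_cont : Continuous f :=
    hcont.comp_continuous (continuous_const.sub continuous_id).norm
      (fun a => norm_nonneg _)
  have f_nn : ∀ a, 0 ≤ f a := fun a => (hrange _ (norm_nonneg _)).1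
  have f_le1 : ∀ a, f a ≤ 1 := fun a => (hrange _ (norm_nonneg _)).2
  -- key pointwise measure comparison on superlevel sets
  have key : ∀ t : ℝ, 0 < t → P₂ {a : H | t < f a} ≤ P₁ {a : H | t < f a} := by
    intro t ht
    by_cases hψ0 : t < ψ 0
    · -- superlevel set is a ball of positive radius
      set S : Set ℝ := {u : ℝ | 0 ≤ u ∧ t < ψ u} with hS
      have hSne : S.Nonempty := ⟨0, le_refl 0, hψ0⟩
      have hbdd : BddAbove S := by
        obtain ⟨M, hM⟩ := (hlim.eventually_lt_const ht).exists_forall_of_atTop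
        exact ⟨M, fun u hu => by
          by_contra hc
          exact absurd hu.2 (not_lt.2 (hM u (not_le.1 hc).le).le)⟩
      set r : ℝ := sSup S with hr
      have hiff : ∀ u : ℝ, 0 ≤ u → (t < ψ u ↔ u < r) := by
        intro u hu
        constructor
        · intro htu
          have hcw : ContinuousWithinAt ψ (Set.Ici 0) u := hcont u hu
          have hev : ∀ᶠ v in nhdsWithin u (Set.Ici 0), t < ψ v :=
            hcw.eventually (eventually_gt_nhds htu)
          have hle : nhdsWithin u (Set.Ioi u) ≤ nhdsWithin u (Set.Ici 0) :=
            nhdsWithin_mono u (fun v hv => le_trans hu (le_of_lt hv))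
          have hev' : ∀ᶠ v in nhdsWithin u (Set.Ioi u), t < ψ v := hle hev
          obtain ⟨v, hv1, hv2⟩ := (hev'.and self_mem_nhdsWithin).exists
          exact lt_of_lt_of_le hv2 (le_csSup hbdd ⟨le_trans hu hv2.le, hv1⟩)
        · intro hur
          obtain ⟨v, hvS, huv⟩ := exists_lt_of_lt_csSup hSne hur
          exact lt_trans hvS.2 (hanti hu (le_trans hu huv.le) huv)
      have hr0 : 0 < r := (hiff 0 le_rfl).1 hψ0
      have hset : {a : H | t < f a} = Metric.ball y r := by
        ext a
        have := hiff ‖y - a‖ (norm_nonneg _)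
        simp only [Set.mem_setOf_eq, Metric.mem_ball, hf]
        rw [this, dist_eq_norm, norm_sub_rev]
      rw [hset]
      exact hcon r hr0
    · -- superlevel set is empty
      have hset : {a : H | t < f a} = ∅ := by
        ext a
        simp only [Set.mem_setOf_eq, Set.mem_empty_iff_false, iff_false, not_lt]
        show ψ ‖y - a‖ ≤ t
        rcases eq_or_lt_of_le (norm_nonneg (y - a)) with he | hlt
        · rw [← he]; exact not_lt.1 hψ0
        · exact le_trans (le_of_lt (hanti (Set.mem_Ici.2 le_rfl) (Set.mem_Ici.2 (norm_nonneg _)) hlt)) (not_lt.1 hψ0)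
      rw [hset]; simp
  -- layer cake comparison
  have hnn₁ : 0 ≤ᵐ[P₁] f := Eventually.of_forall f_nn
  have hnn₂ : 0 ≤ᵐ[P₂] f := Eventually.of_forall f_nn
  have hL : (∫⁻ a, ENNReal.ofReal (f a) ∂P₂) ≤ ∫⁻ a, ENNReal.ofReal (f a) ∂P₁ := by
    rw [lintegral_eq_lintegral_meas_lt P₂ hnn₂ f_cont.aemeasurable,
      lintegral_eq_lintegral_meas_lt P₁ hnn₁ f_cont.aemeasurable]
    refine lintegral_mono_ae ?_
    filter_upwards [self_mem_ae_restrict measurableSet_Ioi] with t ht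
    exact key t ht
  have hfin : (∫⁻ a, ENNReal.ofReal (f a) ∂P₁) ≤ 1 := by
    calc (∫⁻ a, ENNReal.ofReal (f a) ∂P₁) ≤ ∫⁻ _, 1 ∂P₁ :=
          lintegral_mono fun a => by
            simpa using ENNReal.ofReal_le_ofReal (f_le1 a)
      _ = 1 := by simp
  have hint₁ : (∫ x, f x ∂P₁) = (∫⁻ a, ENNReal.ofReal (f a) ∂P₁).toReal :=
    integral_eq_lintegral_of_nonneg_ae hnn₁ f_cont.aestronglyMeasurable
  have hint₂ : (∫ x, f x ∂P₂) = (∫⁻ a, ENNReal.ofReal (f a) ∂P₂).toReal :=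
    integral_eq_lintegral_of_nonneg_ae hnn₂ f_cont.aestronglyMeasurable
  have : (∫ x, f x ∂P₂) ≤ ∫ x, f x ∂P₁ := by
    rw [hint₁, hint₂]
    exact ENNReal.toReal_mono (lt_of_le_of_lt hfin ENNReal.one_lt_top).ne hL
  exact absurd h (not_lt.2 this)
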